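/- arXiv:1809.08195 — 2 statements merged into one kernel-verified Lean document; each statement's English description precedes it below -/
import Mathlib

section
/- The first-fit bin packing algorithm is a 2-approximation: for any list of item sizes each in (0, C], the number of bins of capacity C opened by first-fit is less than twice the optimal number of bins, i.e., FF ≤ 2·OPT (equivalently, FF < 2·OPT + 1). -/
/-- Insert an item of size `s` into the first bin (given by its current load)
where it fits within capacity `C`; open a new bin otherwise. -/
def ffInsert (C s : ℚ) : List ℚ → List ℚ
  | [] => [s]
  | l :: ls => if l + s ≤ C then (l + s) :: ls else l :: ffInsert C s ls

/-- First-fit packing: process the items in order, returning the list of bin loads. -/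
def firstFit (C : ℚ) (items : List ℚ) : List ℚ :=
  items.foldl (fun bins s => ffInsert C s bins) []

/-- `items` can be validly packed into `k` bins of capacity `C`. -/
def ValidPacking (C : ℚ) (items : List ℚ) (k : ℕ) : Prop :=
  ∃ f : Fin items.length → Fin k,
    ∀ j : Fin k,
      (((List.finRange items.length).filter (fun i => f i = j)).map
        (fun i => items.get i)).sum ≤ C

lemma ffInsert_mem (C s : ℚ) : ∀ l, ∀ b ∈ ffInsert C s l,
    b ∈ l ∨ (∃ b' ∈ l, b = b' + s) ∨ b = s := by
  intro l
  induction l with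
  | nil => intro b hb; simp [ffInsert] at hb; tauto
  | cons a l ih =>
    intro b hb
    by_cases h : a + s ≤ C
    · simp [ffInsert, h] at hb
      rcases hb with h1 | h1
      · exact Or.inr (Or.inl ⟨a, by simp, h1⟩)
      · exact Or.inl (by simp [h1])
    · simp [ffInsert, h] at hb
      rcases hb with h1 | h1
      · exact Or.inl (by simp [h1])
      · rcases ih b h1 with h2 | ⟨b', hb', h2⟩ | h2
        · exact Or.inl (by simp [h2])
        · exact Or.inr (Or.inl ⟨b', by simp [hb'], h2⟩)
        · exact Or.inr (Or.inr h2)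

lemma ffInsert_sum (C s : ℚ) : ∀ l, (ffInsert C s l).sum = l.sum + s := by
  intro l
  induction l with
  | nil => simp [ffInsert]
  | cons a l ih =>
    by_cases h : a + s ≤ C <;> simp [ffInsert, h, ih] <;> ring

lemma ffInsert_pos (C s : ℚ) (hs : 0 < s) (l : List ℚ) (hl : ∀ b ∈ l, 0 < b) :
    ∀ b ∈ ffInsert C s l, 0 < b := by
  intro b hb
  rcases ffInsert_mem C s l b hb with h | ⟨b', hb', h⟩ | h
  · exact hl b h
  · subst h; exact add_pos (hl b' hb') hs
  · subst h; exact hs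

lemma ffInsert_pairwise (C s : ℚ) (hs : 0 < s) :
    ∀ l : List ℚ, (∀ b ∈ l, 0 < b) → l.Pairwise (fun x y => C < x + y) →
    (ffInsert C s l).Pairwise (fun x y => C < x + y) := by
  intro l
  induction l with
  | nil => intro _ _; simp [ffInsert]
  | cons a l ih =>
    intro hpos hp
    rw [List.pairwise_cons] at hp
    by_cases h : a + s ≤ C
    · simp only [ffInsert, if_pos h]
      rw [List.pairwise_cons]
      refine ⟨fun b hb => ?_, hp.2⟩
      have := hp.1 b hb
      linarith
    · simp only [ffInsert, if_neg h]
      rw [List.pairwise_cons]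
      push_neg at h
      refine ⟨fun b hb => ?_, ih (fun b hb => hpos b (by simp [hb])) hp.2⟩
      rcases ffInsert_mem C s l b hb with h2 | ⟨b', hb', h2⟩ | h2
      · exact hp.1 b h2
      · have := hp.1 b' hb'; subst h2; linarith
      · subst h2; exact h

lemma foldl_inv (C : ℚ) :
    ∀ (items : List ℚ), (∀ s ∈ items, 0 < s ∧ s ≤ C) →
    ∀ bins : List ℚ, (∀ b ∈ bins, 0 < b) →
      bins.Pairwise (fun x y => C < x + y) →
    (∀ b ∈ items.foldl (fun bs s => ffInsert C s bs) bins, 0 < b) ∧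
    (items.foldl (fun bs s => ffInsert C s bs) bins).Pairwise (fun x y => C < x + y) ∧
    (items.foldl (fun bs s => ffInsert C s bs) bins).sum = bins.sum + items.sum := by
  intro items
  induction items with
  | nil => intro _ bins h1 h2; simpa using ⟨h1, h2⟩
  | cons s items ih =>
    intro hs bins h1 h2
    have hs0 := (hs s (by simp)).1
    have step := ih (fun x hx => hs x (by simp [hx])) (ffInsert C s bins)
      (ffInsert_pos C s hs0 bins h1) (ffInsert_pairwise C s hs0 bins h1 h2)
    refine ⟨step.1, step.2.1, ?_⟩
    simp only [List.foldl_cons, step.2.2, ffInsert_sum, List.sum_cons]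
    ring

lemma pairwise_count (C : ℚ) (hC : 0 < C) :
    ∀ l : List ℚ, (∀ b ∈ l, 0 < b) → l.Pairwise (fun x y => C < x + y) →
    ((l.length : ℚ) - 1) * C < 2 * l.sum
  | [] => by intro _ _; simp; linarith
  | [a] => by
    intro hpos _
    have := hpos a (by simp)
    simp; linarith
  | a :: b :: l => by
    intro hpos hp
    rw [List.pairwise_cons] at hp
    rw [List.pairwise_cons] at hp
    have hab : C < a + b := hp.1 b (by simp)
    have ihl := pairwise_count C hC l (fun x hx => hpos x (by simp [hx])) hp.2.2
    simp only [List.length_cons, List.sum_cons]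
    push_cast
    linarith

lemma sum_map_filter {α : Type*} (p : α → Bool) (g : α → ℚ) :
    ∀ l : List α, ((l.filter p).map g).sum = (l.map fun i => if p i then g i else 0).sum := by
  intro l
  induction l with
  | nil => simp
  | cons a l ih => cases h : p a <;> simp [List.filter_cons, h, ih]

/-- First-fit is a 2-approximation: `FF ≤ 2·OPT`. -/
theorem firstFit_two_approx (C : ℚ) (hC : 0 < C) (items : List ℚ)
    (hitems : ∀ s ∈ items, 0 < s ∧ s ≤ C)
    (k : ℕ) (hk : ValidPacking C items k) :
    (firstFit C items).length ≤ 2 * k := by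
  obtain ⟨f, hf⟩ := hk
  -- total item sum is at most k * C
  have hsum_le : items.sum ≤ (k : ℚ) * C := by
    have h1 : items.sum = ∑ i : Fin items.length, items.get i := by
      conv_lhs => rw [← List.map_get_finRange items]
      rw [Fin.sum_univ_def]
    have h2 : ∀ j : Fin k,
        (∑ i ∈ Finset.univ.filter (fun i => f i = j), items.get i) ≤ C := by
      intro j
      have h := hf j
      rw [sum_map_filter] at h
      rw [Finset.sum_filter, Fin.sum_univ_def]
      simpa using h
    have h3 : items.sum = ∑ j : Fin k,
        ∑ i ∈ Finset.univ.filter (fun i => f i = j), items.get i := by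
      rw [h1, Finset.sum_fiberwise]
    rw [h3]
    calc (∑ j : Fin k, ∑ i ∈ Finset.univ.filter (fun i => f i = j), items.get i)
        ≤ ∑ _j : Fin k, C := Finset.sum_le_sum fun j _ => h2 j
      _ = (k : ℚ) * C := by simp [mul_comm]
  -- first-fit invariants
  have hinv := foldl_inv C items hitems [] (by simp) (by simp)
  have hcount := pairwise_count C hC (firstFit C items) hinv.1 hinv.2.1
  have hffsum : (firstFit C items).sum = items.sum := by
    have := hinv.2.2; simpa [firstFit] using this
  rw [hffsum] at hcount
  -- combine
  have hlt : ((firstFit C items).length : ℚ) - 1 < 2 * k := by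
    have h2kC : 2 * items.sum ≤ 2 * ((k : ℚ) * C) := by linarith
    have := lt_of_lt_of_le hcount h2kC
    nlinarith
  have : ((firstFit C items).length : ℚ) < 2 * k + 1 := by linarith
  have hnat : (firstFit C items).length < 2 * k + 1 := by exact_mod_cast this
  omega
end

section
/- If every internal node of a rooted ternary tree of depth k (with leaves at depth 0 being inputs) is a majority gate, then the tree function can be evaluated by a register machine with 2(k+1) registers, where each step either loads an input (possibly negated) into a register, copies/negates a register, or overwrites a register r with Maj(r, a, ¬b) for registers or inputs a, b. -/
def Maj (a b c : Bool) : Bool := (a && b) || (b && c) || (a && c)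

/-- A ternary majority tree over `n` Boolean inputs. Leaves are input
literals (variable with a possible negation flag). -/
inductive MTree (n : ℕ) where
  | leaf : Fin n → Bool → MTree n
  | node : MTree n → MTree n → MTree n → MTree n

def MTree.eval {n : ℕ} (x : Fin n → Bool) : MTree n → Bool
  | .leaf i neg => xor (x i) neg
  | .node a b c => Maj (a.eval x) (b.eval x) (c.eval x)

def MTree.depth {n : ℕ} : MTree n → ℕ
  | .leaf _ _ => 0
  | .node a b c => 1 + max a.depth (max b.depth c.depth)

/-- An operand for a register-machine step: a register or an input literal. -/
inductive Opd (n R : ℕ) where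
  | reg : Fin R → Opd n R
  | inp : Fin n → Bool → Opd n R

def Opd.eval {n R : ℕ} (x : Fin n → Bool) (st : Fin R → Bool) : Opd n R → Bool
  | .reg r => st r
  | .inp i neg => xor (x i) neg

/-- A register-machine step: load an input literal into a register, copy the
negation of a register, or the ReRAM update `r ← Maj(r, a, ¬b)`. -/
inductive Step (n R : ℕ) where
  | load : Fin R → Fin n → Bool → Step n R
  | copyneg : Fin R → Fin R → Step n R
  | maj : Fin R → Opd n R → Opd n R → Step n R

def applyStep {n R : ℕ} (x : Fin n → Bool) (st : Fin R → Bool) : Step n R → (Fin R → Bool)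
  | .load r i neg => Function.update st r (xor (x i) neg)
  | .copyneg r r' => Function.update st r (!(st r'))
  | .maj r a b => Function.update st r (Maj (st r) (a.eval x st) (!(b.eval x st)))

def runSteps {n R : ℕ} (x : Fin n → Bool) (steps : List (Step n R))
    (st : Fin R → Bool) : Fin R → Bool :=
  steps.foldl (applyStep x) st

lemma maj_perm (a b c : Bool) : Maj a c b = Maj a b c := by
  cases a <;> cases b <;> cases c <;> rfl

lemma mtree_aux {n : ℕ} (t : MTree n) : ∀ (R : ℕ) (S : Finset (Fin R)) (r : Fin R),
    r ∈ S → 2 * t.depth + 1 ≤ S.card →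
    ∃ steps : List (Step n R), ∀ (x : Fin n → Bool) (st : Fin R → Bool),
      runSteps x steps st r = t.eval x ∧
      ∀ q, q ∉ S → runSteps x steps st q = st q := by
  induction t with
  | leaf i neg =>
    intro R S r hr _
    refine ⟨[.load r i neg], fun x st => ?_⟩
    constructor
    · simp [runSteps, applyStep, MTree.eval]
    · intro q hq
      have hqr : q ≠ r := fun h => hq (h ▸ hr)
      simp [runSteps, applyStep, Function.update_of_ne hqr]
  | node a b c iha ihb ihc =>
    intro R S r hr hcard
    set m := max a.depth (max b.depth c.depth) with hm
    have hda : a.depth ≤ m := le_max_left _ _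
    have hdb : b.depth ≤ m := le_trans (le_max_left _ _) (le_max_right _ _)
    have hdc : c.depth ≤ m := le_trans (le_max_right _ _) (le_max_right _ _)
    have hcard' : 2 * m + 3 ≤ S.card := by
      have : (MTree.node a b c).depth = 1 + m := rfl
      omega
    have h1 : (S.erase r).Nonempty := by
      rw [← Finset.card_pos, Finset.card_erase_of_mem hr]; omega
    obtain ⟨s, hs⟩ := h1
    have hsr : s ≠ r := Finset.ne_of_mem_erase hs
    have hsS : s ∈ S := Finset.mem_of_mem_erase hs
    have h2 : ((S.erase r).erase s).Nonempty := by
      rw [← Finset.card_pos, Finset.card_erase_of_mem hs,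
        Finset.card_erase_of_mem hr]; omega
    obtain ⟨w, hw⟩ := h2
    have hws : w ≠ s := Finset.ne_of_mem_erase hw
    have hw' : w ∈ S.erase r := Finset.mem_of_mem_erase hw
    have hwr : w ≠ r := Finset.ne_of_mem_erase hw'
    have hwS : w ∈ S := Finset.mem_of_mem_erase hw'
    -- register set for evaluating a (into r)
    have hwSs : w ∈ S.erase s := Finset.mem_erase.mpr ⟨hws, hwS⟩
    have hrA : r ∈ (S.erase s).erase w :=
      Finset.mem_erase.mpr ⟨hwr.symm ∘ Eq.symm ∘ id ∘ Eq.symm,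
        Finset.mem_erase.mpr ⟨hsr.symm ∘ Eq.symm ∘ id ∘ Eq.symm, hr⟩⟩
    have hcardA : 2 * a.depth + 1 ≤ ((S.erase s).erase w).card := by
      rw [Finset.card_erase_of_mem hwSs, Finset.card_erase_of_mem hsS]; omega
    obtain ⟨LA, hLA⟩ := iha R ((S.erase s).erase w) r hrA hcardA
    -- register set for evaluating b and c (into s)
    have hsB : s ∈ (S.erase r).erase w := Finset.mem_erase.mpr ⟨hws.symm ∘ Eq.symm ∘ id ∘ Eq.symm, hs⟩
    have hcardB : 2 * b.depth + 1 ≤ ((S.erase r).erase w).card := by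
      rw [Finset.card_erase_of_mem hw', Finset.card_erase_of_mem hr]; omega
    have hcardC : 2 * c.depth + 1 ≤ ((S.erase r).erase w).card := by
      rw [Finset.card_erase_of_mem hw', Finset.card_erase_of_mem hr]; omega
    obtain ⟨LB, hLB⟩ := ihb R ((S.erase r).erase w) s hsB hcardB
    obtain ⟨LC, hLC⟩ := ihc R ((S.erase r).erase w) s hsB hcardC
    refine ⟨LA ++ LB ++ [Step.copyneg w s] ++ LC ++ [Step.maj r (.reg s) (.reg w)],
      fun x st => ?_⟩
    have hrnB : r ∉ (S.erase r).erase w := by simp [Finset.mem_erase]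
    have hwnB : w ∉ (S.erase r).erase w := by simp [Finset.mem_erase]
    set st1 := runSteps x LA st with hst1
    set st2 := runSteps x LB st1 with hst2
    set st3 := applyStep x st2 (.copyneg w s) with hst3
    set st4 := runSteps x LC st3 with hst4
    have hrun : runSteps x (LA ++ LB ++ [Step.copyneg w s] ++ LC
        ++ [Step.maj r (.reg s) (.reg w)]) st
        = applyStep x st4 (.maj r (.reg s) (.reg w)) := by
      simp [runSteps, List.foldl_append, hst1, hst2, hst3, hst4, applyStep]
    have h1r : st1 r = a.eval x := (hLA x st).1
    have h2r : st2 r = st1 r := (hLB x st1).2 r hrnB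
    have h2s : st2 s = b.eval x := (hLB x st1).1
    have h3r : st3 r = st2 r := by
      simp [hst3, applyStep, Function.update_of_ne (Ne.symm hwr)]
    have h3w : st3 w = !(st2 s) := by simp [hst3, applyStep]
    have h3s : st3 s = st2 s := by
      simp [hst3, applyStep, Function.update_of_ne hws.symm]
    have h4r : st4 r = st3 r := (hLC x st3).2 r hrnB
    have h4w : st4 w = st3 w := (hLC x st3).2 w hwnB
    have h4s : st4 s = c.eval x := (hLC x st3).1
    constructor
    · rw [hrun]
      simp only [applyStep, Opd.eval, Function.update_self]
      rw [h4r, h4s, h4w, h3r, h3w, h2r, h2s, h1r, Bool.not_not]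
      show Maj (a.eval x) (c.eval x) (b.eval x) = (MTree.node a b c).eval x
      rw [maj_perm]; rfl
    · intro q hq
      have hqr : q ≠ r := fun h => hq (h ▸ hr)
      have hqs : q ≠ s := fun h => hq (h ▸ hsS)
      have hqw : q ≠ w := fun h => hq (h ▸ hwS)
      have hqA : q ∉ (S.erase s).erase w := fun h =>
        hq (Finset.mem_of_mem_erase (Finset.mem_of_mem_erase h))
      have hqB : q ∉ (S.erase r).erase w := fun h =>
        hq (Finset.mem_of_mem_erase (Finset.mem_of_mem_erase h))
      rw [hrun]
      simp only [applyStep]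
      have h4q : st4 q = st3 q := (hLC x st3).2 q hqB
      have h3q : st3 q = st2 q := by
        simp [hst3, applyStep, Function.update_of_ne hqw]
      have h2q : st2 q = st1 q := (hLB x st1).2 q hqB
      have h1q : st1 q = st q := (hLA x st).2 q hqA
      rw [Function.update_of_ne hqr, h4q, h3q, h2q, h1q]

/-- Any majority tree of depth `k` can be evaluated with `2(k+1)` registers. -/
theorem mtree_registers (n k : ℕ) (t : MTree n) (ht : t.depth = k) :
    ∃ (steps : List (Step n (2 * (k + 1)))) (r : Fin (2 * (k + 1))),
      ∀ x : Fin n → Bool,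
        runSteps x steps (fun _ => false) r = t.eval x := by
  have hpos : 0 < 2 * (k + 1) := by omega
  have r0 : Fin (2 * (k + 1)) := ⟨0, hpos⟩
  have hcard : 2 * t.depth + 1 ≤ (Finset.univ : Finset (Fin (2 * (k + 1)))).card := by
    rw [Finset.card_univ, Fintype.card_fin]; omega
  obtain ⟨steps, hsteps⟩ := mtree_aux t (2 * (k + 1)) Finset.univ r0
    (Finset.mem_univ r0) hcard
  exact ⟨steps, r0, fun x => (hsteps x (fun _ => false)).1⟩
end
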